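/- Let (G, γ, b) be a 4-edge-connected RES-graph, let γ' be a shifting of γ, and let X ∋ b be a vertex set. Then every collection of pairwise edge-disjoint non-zero circuits hitting b has size at most γ'(E(X)) + |δ(X)|/2. Consequently, if (X, γ') certifies the flooding number (i.e., equality in the min-max formula holds), then 2·ν̃(G, γ, b) ≥ the maximum number of edge-disjoint non-zero circuits hitting b. -/

import Mathlib

open scoped Classical

namespace SignedFlood

variable {V E : Type} [Fintype V] [DecidableEq V] [Fintype E] [DecidableEq E]

/-- A circuit (closed trail) in a multigraph specified by `ends : E → Sym2 V`.
Darts are triples `(e, u, v)` meaning edge `e` traversed from `u` to `v`. -/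
structure Circuit {V E : Type} (ends : E → Sym2 V) where
  darts : List (E × V × V)
  nonempty : darts ≠ []
  valid : ∀ d ∈ darts, ends d.1 = s(d.2.1, d.2.2)
  chain : darts.Chain' (fun d d' => d.2.2 = d'.2.1)
  closed : darts.head?.map (fun d => d.2.1) = darts.getLast?.map (fun d => d.2.2)
  edgesNodup : (darts.map Prod.fst).Nodup

namespace Circuit

variable {ends : E → Sym2 V}

/-- The set of edges used by a circuit. -/
def edges (C : Circuit ends) : Finset E := (C.darts.map Prod.fst).toFinset

/-- The weight of a circuit: the sum in `ZMod 2` of the weights of its edges. -/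
def weight (γ : E → ZMod 2) (C : Circuit ends) : ZMod 2 :=
  ((C.darts.map Prod.fst).map γ).sum

/-- A circuit hits `b` if it has an edge (dart) incident to `b`. -/
def Hits (C : Circuit ends) (b : V) : Prop :=
  ∃ d ∈ C.darts, d.2.1 = b ∨ d.2.2 = b

/-- A circuit has `b` as its tail and head. -/
def BasedAt (C : Circuit ends) (b : V) : Prop :=
  C.darts.head?.map (fun d => d.2.1) = some b

end Circuit

/-- Degree of a vertex: loops count twice. -/
noncomputable def degree (ends : E → Sym2 V) (v : V) : ℕ :=
  ∑ e : E, (if ends e = s(v, v) then 2 else if v ∈ ends e then 1 else 0)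

/-- Adjacency via some edge. -/
def Adj (ends : E → Sym2 V) (u v : V) : Prop := ∃ e, ends e = s(u, v)

/-- The multigraph is connected. -/
def Connected (ends : E → Sym2 V) : Prop :=
  ∀ u v : V, Relation.ReflTransGen (Adj ends) u v

/-- Eulerian: connected with all degrees even. -/
def IsEulerian (ends : E → Sym2 V) : Prop :=
  Connected ends ∧ ∀ v : V, Even (degree ends v)

/-- A family of circuits whose edge sets partition the edge set. -/
def IsDecomposition (ends : E → Sym2 V) {k : ℕ} (C : Fin k → Circuit ends) : Prop :=
  ∀ e : E, ∃! i : Fin k, e ∈ (C i).edges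

/-- The flooding number: the maximum size of a circuit-decomposition where each
circuit is non-zero and hits `b` (`0` if there is no such decomposition). -/
noncomputable def floodingNumber (ends : E → Sym2 V) (γ : E → ZMod 2) (b : V) : ℕ :=
  sSup {k : ℕ | ∃ C : Fin k → Circuit ends, IsDecomposition ends C ∧
    ∀ i, (C i).weight γ = 1 ∧ (C i).Hits b}

/-- Shift a signature at a vertex `v`: add `1` to every non-loop edge incident to `v`. -/
noncomputable def shiftAt (ends : E → Sym2 V) (γ : E → ZMod 2) (v : V) : E → ZMod 2 :=
  fun e => γ e + (if v ∈ ends e ∧ ends e ≠ s(v, v) then 1 else 0)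

/-- `γ'` is a shifting of `γ`: obtained by a sequence of shifts at vertices. -/
noncomputable def IsShifting (ends : E → Sym2 V) (γ γ' : E → ZMod 2) : Prop :=
  ∃ l : List V, γ' = l.foldl (shiftAt ends) γ

/-- A pair crosses `X` if it has exactly one member in `X`. -/
def Crossing (X : Set V) (p : Sym2 V) : Prop :=
  ∃ u v, p = s(u, v) ∧ u ∈ X ∧ v ∉ X

/-- `δ(X)`: edges with exactly one end in `X`. -/
noncomputable def cutEdges (ends : E → Sym2 V) (X : Set V) : Finset E :=
  Finset.univ.filter (fun e => Crossing X (ends e))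

/-- `E(X)`: edges with both ends in `X`. -/
noncomputable def insideEdges (ends : E → Sym2 V) (X : Set V) : Finset E :=
  Finset.univ.filter (fun e => ∀ v ∈ ends e, v ∈ X)

/-- `E(Y) ∪ δ(Y)`: edges with at least one end in `Y`. -/
noncomputable def incidentEdges (ends : E → Sym2 V) (Y : Set V) : Finset E :=
  Finset.univ.filter (fun e => ∃ v ∈ ends e, v ∈ Y)

/-- The number of non-zero edges in `F` according to `γ`. -/
noncomputable def nzCount (γ : E → ZMod 2) (F : Finset E) : ℕ :=
  (F.filter (fun e => γ e = 1)).card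

/-- `Y` is `γ`-odd: parity of `γ(E(Y) ∪ δ(Y))` differs from parity of `|δ(Y)|/2`. -/
def OddSet (ends : E → Sym2 V) (γ : E → ZMod 2) (Y : Set V) : Prop :=
  nzCount γ (incidentEdges ends Y) % 2 ≠ ((cutEdges ends Y).card / 2) % 2

/-- The vertex set of the component of `G - X` containing `y`. -/
def compOf (ends : E → Sym2 V) (X : Set V) (y : V) : Set V :=
  {z | Relation.ReflTransGen
    (fun a c => (∃ e, ends e = s(a, c)) ∧ a ∉ X ∧ c ∉ X) y z}

/-- `Y` is the vertex set of a component of `G - X`. -/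
def IsCompOf (ends : E → Sym2 V) (X : Set V) (Y : Set V) : Prop :=
  ∃ y, y ∉ X ∧ Y = compOf ends X y

/-- The number of `γ`-odd components of `G - X`. -/
noncomputable def oddComponents (ends : E → Sym2 V) (γ : E → ZMod 2) (X : Set V) : ℕ :=
  Set.ncard {Y : Set V | IsCompOf ends X Y ∧ OddSet ends γ Y}

/-- A flooding: a circuit-decomposition into `deg(b)/2` circuits, each with `b`
as tail and head. -/
def IsFlooding (ends : E → Sym2 V) (b : V) {k : ℕ} (C : Fin k → Circuit ends) : Prop :=
  k = degree ends b / 2 ∧ IsDecomposition ends C ∧ ∀ i, (C i).BasedAt b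

/-- The number of non-zero circuits in a family of circuits. -/
noncomputable def nonzeroCount (ends : E → Sym2 V) (γ : E → ZMod 2) {k : ℕ}
    (C : Fin k → Circuit ends) : ℕ :=
  (Finset.univ.filter (fun i : Fin k => (C i).weight γ = 1)).card

/-- An optimal flooding maximizes the number of non-zero circuits. -/
def IsOptimalFlooding (ends : E → Sym2 V) (γ : E → ZMod 2) (b : V) {k : ℕ}
    (C : Fin k → Circuit ends) : Prop :=
  IsFlooding ends b C ∧ ∀ (k' : ℕ) (C' : Fin k' → Circuit ends),
    IsFlooding ends b C' → nonzeroCount ends γ C' ≤ nonzeroCount ends γ C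


/-! ### Auxiliary lemmas -/

section Aux

variable {ends : E → Sym2 V}

noncomputable def ind (p : Prop) : ZMod 2 := if p then 1 else 0

lemma ind_of (p : Prop) (h : p) : ind p = 1 := by simp [ind, h]

lemma ind_of_not (p : Prop) (h : ¬ p) : ind p = 0 := by simp [ind, h]

lemma list_sum_add {α M : Type*} [AddCommMonoid M] (l : List α) (f g : α → M) :
    (l.map (fun a => f a + g a)).sum = (l.map f).sum + (l.map g).sum := by
  induction l with
  | nil => simp
  | cons a t ih => simp only [List.map_cons, List.sum_cons, ih]; abel

lemma sum_ind_eq_countP {α : Type*} (l : List α) (q : α → Prop) (f : α → Bool)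
    (hf : ∀ a, f a = true ↔ q a) :
    (l.map (fun a => ind (q a))).sum = (l.countP f : ZMod 2) := by
  induction l with
  | nil => simp
  | cons a t ih =>
    by_cases h : q a
    · rw [List.map_cons, List.sum_cons, ind_of _ h, ih, List.countP_cons,
        if_pos ((hf a).mpr h)]
      push_cast; ring
    · rw [List.map_cons, List.sum_cons, ind_of_not _ h, ih, List.countP_cons,
        if_neg (fun hc => h ((hf a).mp hc))]
      push_cast; ring

lemma card_filter_toFinset {α : Type*} [DecidableEq α] (l : List α) (hl : l.Nodup)
    (p : α → Prop) (f : α → Bool) (hf : ∀ a, f a = true ↔ p a) :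
    (l.toFinset.filter p).card = l.countP f := by
  induction l with
  | nil => simp
  | cons a t ih =>
    rw [List.nodup_cons] at hl
    rw [List.toFinset_cons, List.countP_cons, Finset.filter_insert]
    by_cases h : p a
    · rw [if_pos h, Finset.card_insert_of_notMem (by
        intro hmem
        exact hl.1 (List.mem_toFinset.mp (Finset.mem_filter.mp hmem).1)), ih hl.2,
        if_pos ((hf a).mpr h)]
    · rw [if_neg h, ih hl.2, if_neg (fun hc => h ((hf a).mp hc))]
      omega

lemma chain_map_eq {α β : Type*} (f g : α → β) :
    ∀ (l : List α) (d0 : α), (d0 :: l).Chain' (fun d d' => g d = f d') →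
      List.map g (d0 :: l) = List.map f l ++ [g ((d0 :: l).getLast (by simp))] := by
  intro l
  induction l with
  | nil => intro d0 _; simp
  | cons d1 t ih =>
    intro d0 h
    unfold List.Chain' at h
    rw [List.isChain_cons_cons] at h
    have h2 := ih d1 h.2
    simp only [List.map_cons] at h2 ⊢
    rw [h2, h.1, List.getLast_cons (l := d1 :: t) (by simp)]
    simp

lemma Circuit.perm_snd_fst (C : Circuit ends) :
    (C.darts.map (fun d => d.2.2)).Perm (C.darts.map (fun d => d.2.1)) := by
  obtain ⟨d0, l, hd⟩ := List.exists_cons_of_ne_nil C.nonempty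
  have hch := C.chain
  have hcl := C.closed
  rw [hd] at hch hcl ⊢
  have h1 := chain_map_eq (fun d => d.2.1) (fun d => d.2.2) l d0 hch
  have h3 : ((d0 :: l).getLast (by simp)).2.2 = d0.2.1 := by
    rw [List.getLast?_eq_getLast (l := d0 :: l) (by simp)] at hcl
    simp only [List.head?_cons, Option.map_some] at hcl
    exact (Option.some_injective _ hcl).symm
  rw [h3] at h1
  rw [h1, List.map_cons]
  exact List.perm_append_singleton _ _

lemma Circuit.sum_ind_eq (C : Circuit ends) (p : V → Prop) :
    (C.darts.map (fun d => ind (p d.2.1))).sum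
      = (C.darts.map (fun d => ind (p d.2.2))).sum := by
  have h := (C.perm_snd_fst.map (fun v => ind (p v))).sum_eq
  simp only [List.map_map, Function.comp] at h
  exact h.symm

lemma Circuit.xor_sum_zero (C : Circuit ends) (p : V → Prop) :
    (C.darts.map (fun d => ind (Xor' (p d.2.1) (p d.2.2)))).sum = 0 := by
  have hpt : ∀ d : E × V × V,
      ind (Xor' (p d.2.1) (p d.2.2)) = ind (p d.2.1) + ind (p d.2.2) := by
    intro d
    by_cases h1 : p d.2.1 <;> by_cases h2 : p d.2.2 <;>
      simp [ind, Xor', h1, h2] <;> decide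
  calc (C.darts.map (fun d => ind (Xor' (p d.2.1) (p d.2.2)))).sum
      = (C.darts.map (fun d => ind (p d.2.1) + ind (p d.2.2))).sum := by
        exact congrArg List.sum (List.map_congr_left (fun d _ => hpt d))
    _ = (C.darts.map (fun d => ind (p d.2.1))).sum
        + (C.darts.map (fun d => ind (p d.2.2))).sum := list_sum_add _ _ _
    _ = 0 := by rw [C.sum_ind_eq p]; exact CharTwo.add_self_eq_zero _

lemma Circuit.countP_xor_even (C : Circuit ends) (p : V → Prop)
    (f : E × V × V → Bool) (hf : ∀ d, f d = true ↔ Xor' (p d.2.1) (p d.2.2)) :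
    Even (C.darts.countP f) := by
  have h := C.xor_sum_zero p
  rw [sum_ind_eq_countP C.darts _ f hf] at h
  rw [ZMod.natCast_eq_zero_iff] at h
  exact (even_iff_two_dvd).mpr h

lemma crossing_iff {X : Set V} {u w : V} :
    Crossing X (s(u, w)) ↔ Xor' (u ∈ X) (w ∈ X) := by
  constructor
  · rintro ⟨a, c, h, ha, hc⟩
    rw [Sym2.eq_iff] at h
    rcases h with ⟨rfl, rfl⟩ | ⟨rfl, rfl⟩
    · exact Or.inl ⟨ha, hc⟩
    · exact Or.inr ⟨ha, hc⟩
  · rintro (⟨hu, hw⟩ | ⟨hw, hu⟩)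
    · exact ⟨u, w, rfl, hu, hw⟩
    · exact ⟨w, u, Sym2.eq_swap, hw, hu⟩

lemma weight_shiftAt (C : Circuit ends) (γ : E → ZMod 2) (v : V) :
    C.weight (shiftAt ends γ v) = C.weight γ := by
  unfold Circuit.weight shiftAt
  rw [List.map_map, List.map_map]
  have hpt : ∀ d ∈ C.darts,
      ((fun e => γ e + (if v ∈ ends e ∧ ends e ≠ s(v, v) then (1 : ZMod 2) else 0))
          ∘ Prod.fst) d
        = γ d.1 + ind (Xor' (d.2.1 = v) (d.2.2 = v)) := by
    intro d hd
    have hv := C.valid d hd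
    simp only [Function.comp_apply]
    congr 1
    have h1 : v ∈ ends d.1 ↔ (v = d.2.1 ∨ v = d.2.2) := by rw [hv]; exact Sym2.mem_iff
    have h2 : ends d.1 = s(v, v) ↔ (d.2.1 = v ∧ d.2.2 = v) := by
      rw [hv, Sym2.eq_iff]; tauto
    by_cases e1 : d.2.1 = v <;> by_cases e2 : d.2.2 = v <;>
      simp [ind, h1, h2, e1, e2, Xor'] <;> tauto
  have hz := C.xor_sum_zero (fun x => x = v)
  rw [List.map_congr_left hpt, list_sum_add, hz, add_zero]
  rfl

lemma weight_shifting (C : Circuit ends) {γ γ' : E → ZMod 2}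
    (h : IsShifting ends γ γ') : C.weight γ' = C.weight γ := by
  obtain ⟨l, rfl⟩ := h
  induction l generalizing γ with
  | nil => rfl
  | cons v t ih => rw [List.foldl_cons, ih, weight_shiftAt]

lemma chain_const_aux (X : Set V) :
    ∀ (l : List (E × V × V)) (a : E × V × V),
      (a :: l).Chain' (fun d d' => d.2.2 = d'.2.1) →
      (∀ d ∈ a :: l, (d.2.1 ∈ X ↔ d.2.2 ∈ X)) →
      ∀ d ∈ a :: l, (a.2.1 ∈ X ↔ d.2.1 ∈ X) := by
  intro l
  induction l with
  | nil =>
    intro a _ _ d hd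
    simp only [List.mem_singleton] at hd
    subst hd; exact Iff.rfl
  | cons a' t ih =>
    intro a hch hnc d hd
    unfold List.Chain' at hch
    rw [List.isChain_cons_cons] at hch
    rcases List.mem_cons.mp hd with rfl | hd'
    · exact Iff.rfl
    · have h1 : a.2.1 ∈ X ↔ a'.2.1 ∈ X := by
        have h2 := hnc a (by simp)
        rw [hch.1] at h2
        exact h2
      exact h1.trans (ih a' hch.2 (fun d hd => hnc d (List.mem_cons_of_mem _ hd)) d hd')

lemma circuit_dichotomy (C : Circuit ends) (γ' : E → ZMod 2) (X : Set V) (b : V)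
    (hb : b ∈ X) (hw : C.weight γ' = 1) (hh : C.Hits b) :
    (∃ e ∈ C.edges, e ∈ insideEdges ends X ∧ γ' e = 1) ∨
      2 ≤ (C.edges ∩ cutEdges ends X).card := by
  by_cases hcross : ∀ d ∈ C.darts, ¬ Xor' (d.2.1 ∈ X) (d.2.2 ∈ X)
  · left
    have hiff : ∀ d ∈ C.darts, (d.2.1 ∈ X ↔ d.2.2 ∈ X) := by
      intro d hd
      have := hcross d hd
      unfold Xor' Xor at this
      tauto
    obtain ⟨d₀, hd₀, hb₀⟩ := hh
    have hfst : d₀.2.1 ∈ X := by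
      rcases hb₀ with h | h
      · rw [h]; exact hb
      · exact (hiff d₀ hd₀).mpr (h ▸ hb)
    obtain ⟨a, l, hdl⟩ := List.exists_cons_of_ne_nil C.nonempty
    have hconst : ∀ d ∈ C.darts, (a.2.1 ∈ X ↔ d.2.1 ∈ X) := by
      rw [hdl]
      exact chain_const_aux X l a (hdl ▸ C.chain) (hdl ▸ hiff)
    have hallX : ∀ d ∈ C.darts, d.2.1 ∈ X ∧ d.2.2 ∈ X := by
      intro d hd
      have h1 : d.2.1 ∈ X := ((hconst d hd)).mp (((hconst d₀ hd₀)).mpr hfst)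
      exact ⟨h1, (hiff d hd).mp h1⟩
    -- find a nonzero edge
    have hex : ∃ e ∈ C.darts.map Prod.fst, γ' e = 1 := by
      by_contra hcon
      push_neg at hcon
      have : C.weight γ' = 0 := by
        apply List.sum_eq_zero
        intro x hx
        rw [List.mem_map] at hx
        obtain ⟨e, he, rfl⟩ := hx
        have h0 := hcon e he
        have : ∀ z : ZMod 2, z ≠ 1 → z = 0 := by decide
        exact this _ h0
      rw [hw] at this
      exact one_ne_zero this
    obtain ⟨e, he, hne⟩ := hex
    refine ⟨e, List.mem_toFinset.mpr he, ?_, hne⟩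
    rw [List.mem_map] at he
    obtain ⟨d, hd, rfl⟩ := he
    rw [insideEdges, Finset.mem_filter]
    refine ⟨Finset.mem_univ _, fun v hv => ?_⟩
    rw [C.valid d hd, Sym2.mem_iff] at hv
    rcases hv with rfl | rfl
    · exact (hallX d hd).1
    · exact (hallX d hd).2
  · right
    push_neg at hcross
    set f : E × V × V → Bool := fun d => decide (Xor' (d.2.1 ∈ X) (d.2.2 ∈ X)) with hfdef
    have hfspec : ∀ d : E × V × V, f d = true ↔ Xor' (d.2.1 ∈ X) (d.2.2 ∈ X) := by
      intro d; rw [hfdef]; simp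
    have hpos : 0 < C.darts.countP f := by
      rw [List.countP_pos_iff]
      obtain ⟨d, hd, h⟩ := hcross
      exact ⟨d, hd, (hfspec d).mpr h⟩
    have h2 : 2 ≤ C.darts.countP f := by
      obtain ⟨m, hm⟩ := C.countP_xor_even (fun v => v ∈ X) f hfspec
      omega
    have hcard : (C.edges ∩ cutEdges ends X).card = C.darts.countP f := by
      have h1 : C.edges ∩ cutEdges ends X
          = (C.darts.map Prod.fst).toFinset.filter (fun e => Crossing X (ends e)) := by
        ext e
        simp [Circuit.edges, cutEdges, Finset.mem_inter, Finset.mem_filter]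
        try tauto
      rw [h1, card_filter_toFinset _ C.edgesNodup (fun e => Crossing X (ends e))
        (fun e => decide (Crossing X (ends e))) (fun e => by simp), List.countP_map]
      apply List.countP_congr
      intro d hd
      simp only [Function.comp_apply, decide_eq_true_eq, hfspec]
      rw [C.valid d hd, crossing_iff]
    omega

lemma packing_count {ℓ : ℕ} (D : Fin ℓ → Circuit ends)
    (hdisj : ∀ i j, i ≠ j → Disjoint (D i).edges (D j).edges)
    (A B : Finset E)
    (hDich : ∀ i, (∃ e ∈ (D i).edges, e ∈ A) ∨ 2 ≤ ((D i).edges ∩ B).card) :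
    ℓ ≤ A.card + B.card / 2 := by
  rcases Nat.eq_zero_or_pos ℓ with rfl | hpos
  · exact Nat.zero_le _
  haveI : Nonempty E := by
    obtain ⟨d, l, hd⟩ := List.exists_cons_of_ne_nil (D ⟨0, hpos⟩).nonempty
    exact ⟨d.1⟩
  classical
  set S : Finset (Fin ℓ) := Finset.univ.filter (fun i => ∃ e ∈ (D i).edges, e ∈ A) with hS
  set T : Finset (Fin ℓ) := Finset.univ.filter (fun i => ¬ ∃ e ∈ (D i).edges, e ∈ A) with hT
  have hST : S.card + T.card = ℓ := by
    rw [hS, hT, Finset.card_filter_add_card_filter_not, Finset.card_univ,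
      Fintype.card_fin]
  set f : Fin ℓ → E := fun i =>
    if h : ∃ e ∈ (D i).edges, e ∈ A then h.choose else Classical.arbitrary E with hf
  have hfval : ∀ (i : Fin ℓ) (h : ∃ e ∈ (D i).edges, e ∈ A), f i = h.choose :=
    fun i h => dif_pos h
  have hScard : S.card ≤ A.card := by
    apply Finset.card_le_card_of_injOn f
    · intro i hi
      rw [Finset.mem_coe, hS, Finset.mem_filter] at hi
      rw [hfval i hi.2]
      exact hi.2.choose_spec.2
    · intro i hi j hj hij
      rw [Finset.mem_coe, hS, Finset.mem_filter] at hi hj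
      by_contra hne
      have hie : f i ∈ (D i).edges := by
        rw [hfval i hi.2]; exact hi.2.choose_spec.1
      have hje : f j ∈ (D j).edges := by
        rw [hfval j hj.2]; exact hj.2.choose_spec.1
      rw [hij] at hie
      exact (Finset.disjoint_left.mp (hdisj i j hne)) hie hje
  have hTcard : 2 * T.card ≤ B.card := by
    have hsum : ∀ i ∈ T, 2 ≤ ((D i).edges ∩ B).card := by
      intro i hi
      rw [hT, Finset.mem_filter] at hi
      rcases hDich i with h | h
      · exact absurd h hi.2
      · exact h
    calc 2 * T.card = ∑ _i ∈ T, 2 := by rw [Finset.sum_const, smul_eq_mul, mul_comm]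
      _ ≤ ∑ i ∈ T, ((D i).edges ∩ B).card := Finset.sum_le_sum hsum
      _ = (T.biUnion (fun i => (D i).edges ∩ B)).card := by
          rw [Finset.card_biUnion]
          intro i _ j _ hij
          exact Finset.disjoint_of_subset_left Finset.inter_subset_left
            (Finset.disjoint_of_subset_right Finset.inter_subset_left (hdisj i j hij))
      _ ≤ B.card := Finset.card_le_card (by
          intro e he
          rw [Finset.mem_biUnion] at he
          obtain ⟨i, _, hei⟩ := he
          exact (Finset.mem_inter.mp hei).2)
  have : T.card ≤ B.card / 2 := (Nat.le_div_iff_mul_le (by norm_num)).mpr (by omega)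
  omega

/-! ### Component lemmas -/

lemma compOf_not_mem {X : Set V} {y z : V} (hy : y ∉ X) (hz : z ∈ compOf ends X y) :
    z ∉ X := by
  induction hz with
  | refl => exact hy
  | tail _ h ih => exact h.2.2

lemma compOf_closed {X : Set V} {y u w : V} (hy : y ∉ X) (hu : u ∈ compOf ends X y)
    (hw : w ∉ X) (he : ∃ e, ends e = s(u, w)) : w ∈ compOf ends X y :=
  Relation.ReflTransGen.tail hu ⟨he, compOf_not_mem hy hu, hw⟩

lemma compOf_eq {X : Set V} {y z : V} (hy : y ∉ X) (hz : z ∈ compOf ends X y) :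
    compOf ends X z = compOf ends X y := by
  have hsymm : Symmetric (fun a c : V => (∃ e, ends e = s(a, c)) ∧ a ∉ X ∧ c ∉ X) := by
    intro a c ⟨⟨e, he⟩, ha, hc⟩
    exact ⟨⟨e, by rw [he]; exact Sym2.eq_swap⟩, hc, ha⟩
  ext w
  constructor
  · intro hw
    exact Relation.ReflTransGen.trans hz hw
  · intro hw
    exact Relation.ReflTransGen.trans ((@Relation.ReflTransGen.symmetric _ _ ⟨fun a c h => hsymm h⟩).symm _ _ hz) hw

lemma comp_cut_subset {X Y : Set V} (hY : IsCompOf ends X Y) :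
    cutEdges ends Y ⊆ cutEdges ends X := by
  obtain ⟨y, hy, rfl⟩ := hY
  intro e he
  rw [cutEdges, Finset.mem_filter] at he ⊢
  obtain ⟨_, u, w, huw, hu, hw⟩ := he
  refine ⟨Finset.mem_univ _, w, u, huw.trans Sym2.eq_swap, ?_, compOf_not_mem hy hu⟩
  by_contra hwX
  exact hw (compOf_closed hy hu hwX ⟨e, huw⟩)

lemma comp_cut_nonempty (hconn : Connected ends) {X Y : Set V} {b : V} (hb : b ∈ X)
    (hY : IsCompOf ends X Y) : (cutEdges ends Y).Nonempty := by
  obtain ⟨y, hy, rfl⟩ := hY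
  have hbY : b ∉ compOf ends X y := fun h => compOf_not_mem hy h hb
  have hyY : y ∈ compOf ends X y := Relation.ReflTransGen.refl
  have key : ∀ a c : V, Relation.ReflTransGen (Adj ends) a c →
      a ∉ compOf ends X y → c ∈ compOf ends X y → ∃ e, Crossing (compOf ends X y) (ends e) := by
    intro a c h
    induction h with
    | refl => intro ha hc; exact absurd hc ha
    | @tail m c hac hadj ih =>
      intro ha hc
      by_cases hm : m ∈ compOf ends X y
      · exact ih ha hm
      · obtain ⟨e, he⟩ := hadj
        exact ⟨e, c, m, he.trans Sym2.eq_swap, hc, hm⟩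
  obtain ⟨e, he⟩ := key b y (hconn b y) hbY hyY
  exact ⟨e, Finset.mem_filter.mpr ⟨Finset.mem_univ _, he⟩⟩

lemma comp_cut_disjoint {X Y₁ Y₂ : Set V} (h1 : IsCompOf ends X Y₁)
    (h2 : IsCompOf ends X Y₂) (hne : Y₁ ≠ Y₂) :
    Disjoint (cutEdges ends Y₁) (cutEdges ends Y₂) := by
  obtain ⟨y₁, hy₁, rfl⟩ := h1
  obtain ⟨y₂, hy₂, rfl⟩ := h2
  rw [Finset.disjoint_left]
  intro e he1 he2
  rw [cutEdges, Finset.mem_filter] at he1 he2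
  obtain ⟨_, u, w, huw, hu, hwn⟩ := he1
  have hwX : w ∈ X := by
    by_contra hwX
    exact hwn (compOf_closed hy₁ hu hwX ⟨e, huw⟩)
  obtain ⟨_, a, c, hac, ha, _⟩ := he2
  have haY2 := ha
  have hau : a = u := by
    rw [huw, Sym2.eq_iff] at hac
    rcases hac with ⟨h, _⟩ | ⟨_, h⟩
    · exact h.symm
    · exfalso; exact compOf_not_mem hy₂ (h ▸ ha) hwX
  subst hau
  exact hne ((compOf_eq hy₁ hu).symm.trans (compOf_eq hy₂ haY2))

lemma even_cast_zero {n : ℕ} (h : Even n) : (n : ZMod 2) = 0 := by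
  obtain ⟨m, rfl⟩ := h
  push_cast
  exact CharTwo.add_self_eq_zero _

lemma even_cutEdges (hE : ∀ v : V, Even (degree ends v)) (Y : Set V) :
    Even ((cutEdges ends Y).card) := by
  classical
  have key : ((cutEdges ends Y).card : ZMod 2) = 0 := by
    have h1 : ∀ e : E,
        (∑ v ∈ Finset.univ.filter (· ∈ Y),
          ((if ends e = s(v, v) then (2 : ℕ) else if v ∈ ends e then 1 else 0) : ZMod 2))
          = (if Crossing Y (ends e) then (1 : ZMod 2) else 0) := by
      intro e
      obtain ⟨u, w, huw⟩ : ∃ u w, ends e = s(u, w) :=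
        Sym2.ind (f := fun z => ∃ u w, z = s(u, w))
          (fun x y => ⟨x, y, rfl⟩) (ends e)
      rw [huw]
      by_cases huweq : u = w
      · subst huweq
        have hterm : ∀ v : V,
            ((if s(u, u) = s(v, v) then (2 : ℕ)
              else if v ∈ s(u, u) then 1 else 0) : ZMod 2) = 0 := by
          intro v
          by_cases hv : s(u, u) = s(v, v)
          · rw [if_pos hv]; decide
          · rw [if_neg hv]
            have hvm : v ∉ s(u, u) := by
              intro hmem
              rw [Sym2.mem_iff] at hmem
              have hvu : v = u := by tauto
              exact hv (by rw [hvu])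
            rw [if_neg hvm]
            try simp
        rw [Finset.sum_congr rfl (fun v _ => hterm v), Finset.sum_const, smul_zero]
        have : ¬ Crossing Y (s(u, u)) := by
          rw [crossing_iff]
          rintro (⟨h1, h2⟩ | ⟨h1, h2⟩) <;> exact h2 h1
        rw [if_neg this]
      · have hterm : ∀ v : V,
            ((if s(u, w) = s(v, v) then (2 : ℕ)
              else if v ∈ s(u, w) then 1 else 0) : ZMod 2)
            = (if v = u then (1 : ZMod 2) else 0) + (if v = w then (1 : ZMod 2) else 0) := by
          intro v
          have hne : ¬ s(u, w) = s(v, v) := by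
            rw [Sym2.eq_iff]
            rintro (⟨rfl, rfl⟩ | ⟨rfl, rfl⟩) <;> exact huweq rfl
          rw [if_neg hne]
          by_cases hv : v ∈ s(u, w)
          · rw [if_pos hv]
            rw [Sym2.mem_iff] at hv
            rcases hv with rfl | rfl
            · rw [if_pos rfl, if_neg huweq]; simp
            · rw [if_neg (fun h => huweq h.symm), if_pos rfl]; simp
          · have hv' := hv
            rw [Sym2.mem_iff] at hv'
            push_neg at hv'
            rw [if_neg hv, if_neg hv'.1, if_neg hv'.2]; simp
        rw [Finset.sum_congr rfl (fun v _ => hterm v), Finset.sum_add_distrib,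
          Finset.sum_ite_eq' _ u (fun _ => (1 : ZMod 2)),
          Finset.sum_ite_eq' _ w (fun _ => (1 : ZMod 2))]
        rw [crossing_iff]
        simp only [Finset.mem_filter, Finset.mem_univ, true_and]
        by_cases hu : u ∈ Y <;> by_cases hw : w ∈ Y <;>
          simp [hu, hw, Xor'] <;> decide
    have h2 : (∑ v ∈ Finset.univ.filter (· ∈ Y), ((degree ends v : ℕ) : ZMod 2))
        = ((cutEdges ends Y).card : ZMod 2) := by
      have : ∀ v : V, ((degree ends v : ℕ) : ZMod 2)
          = ∑ e : E, ((if ends e = s(v, v) then (2 : ℕ)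
              else if v ∈ ends e then 1 else 0) : ZMod 2) := by
        intro v
        rw [degree]
        push_cast
        rfl
      rw [Finset.sum_congr rfl (fun v _ => this v), Finset.sum_comm]
      rw [Finset.sum_congr rfl (fun e _ => h1 e)]
      rw [Finset.sum_boole]
      rfl
    have h3 : (∑ v ∈ Finset.univ.filter (· ∈ Y), ((degree ends v : ℕ) : ZMod 2)) = 0 := by
      apply Finset.sum_eq_zero
      intro v _
      exact even_cast_zero (hE v)
    rw [← h2, h3]
  rw [ZMod.natCast_eq_zero_iff] at key
  exact (even_iff_two_dvd).mpr key

lemma odd_comp_bound (hE : IsEulerian ends) {b : V}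
    (h4 : ∀ Y : Set V, b ∉ Y → (cutEdges ends Y).card ≠ 2)
    {X : Set V} (hb : b ∈ X) (γ' : E → ZMod 2) :
    4 * oddComponents ends γ' X ≤ (cutEdges ends X).card := by
  classical
  set 𝒮 : Set (Set V) := {Y : Set V | IsCompOf ends X Y ∧ OddSet ends γ' Y} with h𝒮
  have hfin : 𝒮.Finite := Set.toFinite _
  set F : Finset (Set V) := hfin.toFinset with hF
  have hcardeq : oddComponents ends γ' X = F.card := by
    rw [oddComponents, Set.ncard_eq_toFinset_card _ hfin]
  have hbY : ∀ Y ∈ F, b ∉ Y := by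
    intro Y hY
    rw [hF, Set.Finite.mem_toFinset] at hY
    obtain ⟨⟨y, hy, rfl⟩, _⟩ := hY
    exact fun h => compOf_not_mem hy h hb
  have hcomp : ∀ Y ∈ F, IsCompOf ends X Y := by
    intro Y hY
    rw [hF, Set.Finite.mem_toFinset] at hY
    exact hY.1
  have h4le : ∀ Y ∈ F, 4 ≤ (cutEdges ends Y).card := by
    intro Y hY
    have he := even_cutEdges hE.2 Y
    have hne0 : (cutEdges ends Y).card ≠ 0 := by
      have := comp_cut_nonempty hE.1 hb (hcomp Y hY)
      exact Finset.card_ne_zero_of_mem this.choose_spec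
    have hne2 := h4 Y (hbY Y hY)
    obtain ⟨m, hm⟩ := he
    omega
  calc 4 * oddComponents ends γ' X = ∑ _Y ∈ F, 4 := by
        rw [Finset.sum_const, smul_eq_mul, hcardeq, mul_comm]
    _ ≤ ∑ Y ∈ F, (cutEdges ends Y).card := Finset.sum_le_sum h4le
    _ = (F.biUnion (fun Y => cutEdges ends Y)).card := by
        rw [Finset.card_biUnion]
        intro Y₁ h₁ Y₂ h₂ hne
        exact comp_cut_disjoint (hcomp Y₁ h₁) (hcomp Y₂ h₂) hne
    _ ≤ (cutEdges ends X).card := Finset.card_le_card (by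
        intro e he
        rw [Finset.mem_biUnion] at he
        obtain ⟨Y, hY, heY⟩ := he
        exact comp_cut_subset (hcomp Y hY) heY)

end Aux

/-- any family of edge-disjoint non-zero circuits hitting `b` has size
at most `γ'(E(X)) + |δ(X)|/2`; consequently, if `(X, γ')` is a certificate then twice
the flooding number bounds the packing number. -/
theorem packing_upper_bound (ends : E → Sym2 V) (γ γ' : E → ZMod 2) (b : V)
    (hE : IsEulerian ends)
    (h4 : ∀ Y : Set V, b ∉ Y → (cutEdges ends Y).card ≠ 2)
    (hsh : IsShifting ends γ γ') (X : Set V) (hb : b ∈ X) :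
    (∀ (ℓ : ℕ) (D : Fin ℓ → Circuit ends),
      (∀ i j, i ≠ j → Disjoint (D i).edges (D j).edges) →
      (∀ i, (D i).weight γ = 1 ∧ (D i).Hits b) →
      ℓ ≤ nzCount γ' (insideEdges ends X) + (cutEdges ends X).card / 2) ∧
    ((floodingNumber ends γ b : ℤ) =
        (nzCount γ' (insideEdges ends X) : ℤ) + ((cutEdges ends X).card / 2 : ℕ)
          - (oddComponents ends γ' X : ℤ) →
      ∀ (ℓ : ℕ) (D : Fin ℓ → Circuit ends),
        (∀ i j, i ≠ j → Disjoint (D i).edges (D j).edges) →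
        (∀ i, (D i).weight γ = 1 ∧ (D i).Hits b) →
        ℓ ≤ 2 * floodingNumber ends γ b) := by
  have part1 : ∀ (ℓ : ℕ) (D : Fin ℓ → Circuit ends),
      (∀ i j, i ≠ j → Disjoint (D i).edges (D j).edges) →
      (∀ i, (D i).weight γ = 1 ∧ (D i).Hits b) →
      ℓ ≤ nzCount γ' (insideEdges ends X) + (cutEdges ends X).card / 2 := by
    intro ℓ D hdisj hprop
    have hbound := packing_count D hdisj
      ((insideEdges ends X).filter (fun e => γ' e = 1)) (cutEdges ends X) ?_
    · rw [nzCount]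
      exact hbound
    · intro i
      have hw' : (D i).weight γ' = 1 := by
        rw [weight_shifting (D i) hsh]
        exact (hprop i).1
      rcases circuit_dichotomy (D i) γ' X b hb hw' (hprop i).2 with ⟨e, he, hin, hnz⟩ | h
      · exact Or.inl ⟨e, he, Finset.mem_filter.mpr ⟨hin, hnz⟩⟩
      · exact Or.inr h
  refine ⟨part1, ?_⟩
  intro hcert ℓ D hdisj hprop
  have h1 := part1 ℓ D hdisj hprop
  have hoc := odd_comp_bound hE h4 hb γ'
  have heven := even_cutEdges hE.2 X
  obtain ⟨m, hm⟩ := heven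
  omega

end SignedFlood
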